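/- arXiv:1705.07611 — 4 statements merged into one kernel-verified Lean document; each statement's English description precedes it below -/
import Mathlib

section
/- The Laguerre polynomials are orthogonal with respect to the weight e^{-t} on (0,\infty): for m \neq n, \int_0^\infty e^{-t} L_m(t) L_n(t) dt = 0, and \int_0^\infty e^{-t} L_n(t)^2 dt = 1. -/
open Real MeasureTheory

/-- The `n`-th Laguerre polynomial `L_n(t) = ∑_{k=0}^n C(n,k) (-t)^k / k!`. -/
noncomputable def laguerre (n : ℕ) (t : ℝ) : ℝ :=
  ∑ k ∈ Finset.range (n + 1), (n.choose k : ℝ) * (-t) ^ k / (Nat.factorial k : ℝ)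

/-- Real version of the alternating sum of binomial coefficients. -/
lemma real_alternating_sum_range_choose (N : ℕ) :
    (∑ i ∈ Finset.range (N + 1), (-1 : ℝ) ^ i * (N.choose i : ℝ)) =
      if N = 0 then 1 else 0 := by
  have h := Int.alternating_sum_range_choose (n := N)
  have : ((∑ i ∈ Finset.range (N + 1), ((-1) ^ i * N.choose i : ℤ) : ℤ) : ℝ)
      = ((if N = 0 then 1 else 0 : ℤ) : ℝ) := by rw [h]
  push_cast at this
  split_ifs with hN <;> simp_all

/-- Key identity 1 : `∑_{j=0}^m (-1)^j C(m,j) C(j,n) = (-1)^m δ_{mn}`. -/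
lemma alt_choose_choose (m n : ℕ) :
    ∑ j ∈ Finset.range (m + 1), (-1 : ℝ) ^ j * (m.choose j : ℝ) * (j.choose n : ℝ)
      = if m = n then (-1 : ℝ) ^ m else 0 := by
  rcases lt_or_ge m n with h | h
  · rw [if_neg (by omega)]
    apply Finset.sum_eq_zero
    intro j hj
    have hjn : j < n := lt_of_le_of_lt (Nat.lt_succ_iff.mp (Finset.mem_range.mp hj)) h
    simp [Nat.choose_eq_zero_of_lt hjn]
  · -- n ≤ m
    have hzero : ∀ j ∈ Finset.range (m + 1), j ∉ Finset.Ico n (m + 1) →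
        (-1 : ℝ) ^ j * (m.choose j : ℝ) * (j.choose n : ℝ) = 0 := by
      intro j hj hj'
      have : j < n := by
        simp only [Finset.mem_Ico, Finset.mem_range] at *
        omega
      simp [Nat.choose_eq_zero_of_lt this]
    rw [← Finset.sum_subset (by
        intro x hx
        simp only [Finset.mem_Ico, Finset.mem_range] at *
        omega) hzero]
    rw [Finset.sum_Ico_eq_sum_range]
    have hcongr : ∀ i ∈ Finset.range (m + 1 - n),
        (-1 : ℝ) ^ (n + i) * (m.choose (n + i) : ℝ) * ((n + i).choose n : ℝ)
          = ((-1 : ℝ) ^ n * (m.choose n : ℝ)) * ((-1 : ℝ) ^ i * ((m - n).choose i : ℝ)) := by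
      intro i hi
      have hi' : n + i ≤ m := by
        simp only [Finset.mem_range] at hi
        omega
      have key := Nat.choose_mul (n := m) (k := n + i) (s := n) (Nat.le_add_right n i)
      have key' : (m.choose (n + i) : ℝ) * ((n + i).choose n : ℝ)
          = (m.choose n : ℝ) * ((m - n).choose i : ℝ) := by
        have h2 : (n + i) - n = i := by omega
        rw [h2] at key
        exact_mod_cast congrArg (fun x : ℕ => (x : ℝ)) key
      rw [pow_add]
      linear_combination ((-1 : ℝ) ^ n * (-1 : ℝ) ^ i) * key'
    rw [Finset.sum_congr rfl hcongr, ← Finset.mul_sum]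
    have hmn : m + 1 - n = (m - n) + 1 := by omega
    rw [hmn, real_alternating_sum_range_choose (m - n)]
    rcases eq_or_ne m n with rfl | hne
    · simp
    · have : m - n ≠ 0 := by omega
      simp [this, hne]

/-- Key identity 2 : `∑_{k=0}^n (-1)^k C(n,k) C(j+k,k) = (-1)^n C(j,n)`. -/
lemma alt_choose_add_choose (n j : ℕ) :
    ∑ k ∈ Finset.range (n + 1), (-1 : ℝ) ^ k * (n.choose k : ℝ) * ((j + k).choose k : ℝ)
      = (-1 : ℝ) ^ n * (j.choose n : ℝ) := by
  have hvdm : ∀ k : ℕ, ((j + k).choose k : ℝ)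
      = ∑ a ∈ Finset.range (j + 1), (k.choose a : ℝ) * (j.choose (j - a) : ℝ) := by
    intro k
    have h1 : (j + k).choose k = (k + j).choose j := by
      rw [Nat.add_comm j k, Nat.choose_symm_add]
    have h2 := Nat.add_choose_eq k j j
    have h3 := Finset.Nat.sum_antidiagonal_eq_sum_range_succ_mk
      (fun ij : ℕ × ℕ => k.choose ij.1 * j.choose ij.2) j
    rw [h1, h2, h3]
    push_cast
    simp
  calc
    ∑ k ∈ Finset.range (n + 1), (-1 : ℝ) ^ k * (n.choose k : ℝ) * ((j + k).choose k : ℝ)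
      = ∑ k ∈ Finset.range (n + 1), ∑ a ∈ Finset.range (j + 1),
          ((-1 : ℝ) ^ k * (n.choose k : ℝ) * (k.choose a : ℝ)) * (j.choose (j - a) : ℝ) := by
        refine Finset.sum_congr rfl fun k _ => ?_
        rw [hvdm k, Finset.mul_sum]
        refine Finset.sum_congr rfl fun a _ => ?_
        ring
    _ = ∑ a ∈ Finset.range (j + 1),
          (∑ k ∈ Finset.range (n + 1),
            (-1 : ℝ) ^ k * (n.choose k : ℝ) * (k.choose a : ℝ)) * (j.choose (j - a) : ℝ) := by
        rw [Finset.sum_comm]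
        exact Finset.sum_congr rfl fun a _ => (Finset.sum_mul _ _ _).symm
    _ = ∑ a ∈ Finset.range (j + 1),
          (if n = a then (-1 : ℝ) ^ n * (j.choose (j - a) : ℝ) else 0) := by
        refine Finset.sum_congr rfl fun a _ => ?_
        rw [alt_choose_choose n a]
        split_ifs <;> simp
    _ = (-1 : ℝ) ^ n * (j.choose n : ℝ) := by
        rw [Finset.sum_ite_eq]
        rcases le_or_gt n j with hnj | hnj
        · rw [if_pos (Finset.mem_range.mpr (by omega)), Nat.choose_symm hnj]
        · rw [if_neg (by simp; omega), Nat.choose_eq_zero_of_lt hnj]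
          simp

lemma integrableOn_exp_neg_mul_pow (k : ℕ) :
    IntegrableOn (fun t : ℝ => Real.exp (-t) * t ^ k) (Set.Ioi 0) := by
  have h := Real.GammaIntegral_convergent (s := (k : ℝ) + 1) (by positivity)
  refine h.congr_fun (fun x hx => ?_) measurableSet_Ioi
  have hx' : (0 : ℝ) < x := hx
  dsimp only
  rw [show (k : ℝ) + 1 - 1 = (k : ℝ) by ring, Real.rpow_natCast]

lemma integral_exp_neg_mul_pow (k : ℕ) :
    ∫ t in Set.Ioi (0 : ℝ), Real.exp (-t) * t ^ k = (k.factorial : ℝ) := by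
  have h := Real.Gamma_eq_integral (s := (k : ℝ) + 1) (by positivity)
  have h2 : Real.Gamma ((k : ℝ) + 1) = (k.factorial : ℝ) := Real.Gamma_nat_eq_factorial k
  rw [← h2, h]
  refine setIntegral_congr_fun measurableSet_Ioi (fun x hx => ?_)
  have hx' : (0 : ℝ) < x := hx
  rw [show (k : ℝ) + 1 - 1 = (k : ℝ) by ring, Real.rpow_natCast]

lemma exp_laguerre_pow_eq (n j : ℕ) (t : ℝ) :
    Real.exp (-t) * laguerre n t * t ^ j
      = ∑ k ∈ Finset.range (n + 1),
          ((n.choose k : ℝ) * (-1 : ℝ) ^ k / (k.factorial : ℝ)) *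
            (Real.exp (-t) * t ^ (j + k)) := by
  unfold laguerre
  rw [Finset.mul_sum, Finset.sum_mul]
  refine Finset.sum_congr rfl fun k _ => ?_
  rw [neg_pow, pow_add]
  ring

lemma integrableOn_exp_laguerre_pow (n j : ℕ) :
    IntegrableOn (fun t : ℝ => Real.exp (-t) * laguerre n t * t ^ j) (Set.Ioi 0) := by
  have heq : (fun t : ℝ => Real.exp (-t) * laguerre n t * t ^ j)
      = fun t => ∑ k ∈ Finset.range (n + 1),
          ((n.choose k : ℝ) * (-1 : ℝ) ^ k / (k.factorial : ℝ)) *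
            (Real.exp (-t) * t ^ (j + k)) := funext (exp_laguerre_pow_eq n j)
  rw [heq]
  exact integrable_finset_sum _ fun k _ =>
    (integrableOn_exp_neg_mul_pow (j + k)).const_mul _

/-- Moments of Laguerre polynomials. -/
lemma laguerre_moment (n j : ℕ) :
    ∫ t in Set.Ioi (0 : ℝ), Real.exp (-t) * laguerre n t * t ^ j
      = (-1 : ℝ) ^ n * (j.choose n : ℝ) * (j.factorial : ℝ) := by
  have heq : (fun t : ℝ => Real.exp (-t) * laguerre n t * t ^ j)
      = fun t => ∑ k ∈ Finset.range (n + 1),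
          ((n.choose k : ℝ) * (-1 : ℝ) ^ k / (k.factorial : ℝ)) *
            (Real.exp (-t) * t ^ (j + k)) := funext (exp_laguerre_pow_eq n j)
  rw [show (∫ t in Set.Ioi (0 : ℝ), Real.exp (-t) * laguerre n t * t ^ j)
      = ∫ t in Set.Ioi (0 : ℝ), ∑ k ∈ Finset.range (n + 1),
          ((n.choose k : ℝ) * (-1 : ℝ) ^ k / (k.factorial : ℝ)) *
            (Real.exp (-t) * t ^ (j + k)) from by rw [← heq]]
  rw [integral_finset_sum _ fun k _ =>
    ((integrableOn_exp_neg_mul_pow (j + k)).const_mul _)]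
  have hterm : ∀ k ∈ Finset.range (n + 1),
      (∫ t in Set.Ioi (0 : ℝ),
          ((n.choose k : ℝ) * (-1 : ℝ) ^ k / (k.factorial : ℝ)) *
            (Real.exp (-t) * t ^ (j + k)))
        = ((-1 : ℝ) ^ k * (n.choose k : ℝ) * ((j + k).choose k : ℝ)) * (j.factorial : ℝ) := by
    intro k _
    rw [MeasureTheory.integral_const_mul _ _, integral_exp_neg_mul_pow (j + k)]
    have hfac : ((j + k).factorial : ℝ)
        = ((j + k).choose k : ℝ) * (k.factorial : ℝ) * (j.factorial : ℝ) := by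
      have := Nat.choose_mul_factorial_mul_factorial (n := j + k) (k := k) (Nat.le_add_left k j)
      have h2 : j + k - k = j := by omega
      rw [h2] at this
      exact_mod_cast (congrArg (fun x : ℕ => (x : ℝ)) this).symm
    rw [hfac]
    have hk : (k.factorial : ℝ) ≠ 0 := by exact_mod_cast (Nat.factorial_pos k).ne'
    field_simp
  rw [Finset.sum_congr rfl hterm, ← Finset.sum_mul, alt_choose_add_choose n j]

lemma exp_laguerre_laguerre_eq (m n : ℕ) (t : ℝ) :
    Real.exp (-t) * laguerre m t * laguerre n t
      = ∑ j ∈ Finset.range (m + 1),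
          ((m.choose j : ℝ) * (-1 : ℝ) ^ j / (j.factorial : ℝ)) *
            (Real.exp (-t) * laguerre n t * t ^ j) := by
  conv_lhs => rw [show laguerre m t
      = ∑ j ∈ Finset.range (m + 1), (m.choose j : ℝ) * (-t) ^ j / (j.factorial : ℝ) from rfl]
  rw [Finset.mul_sum, Finset.sum_mul]
  refine Finset.sum_congr rfl fun j _ => ?_
  rw [neg_pow]
  ring

lemma laguerre_main (m n : ℕ) :
    ∫ t in Set.Ioi (0 : ℝ), Real.exp (-t) * laguerre m t * laguerre n t
      = if m = n then 1 else 0 := by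
  rw [show (∫ t in Set.Ioi (0 : ℝ), Real.exp (-t) * laguerre m t * laguerre n t)
      = ∫ t in Set.Ioi (0 : ℝ), ∑ j ∈ Finset.range (m + 1),
          ((m.choose j : ℝ) * (-1 : ℝ) ^ j / (j.factorial : ℝ)) *
            (Real.exp (-t) * laguerre n t * t ^ j) from by
        simp_rw [← exp_laguerre_laguerre_eq]]
  rw [integral_finset_sum _ fun j _ => ((integrableOn_exp_laguerre_pow n j).const_mul _)]
  have hterm : ∀ j ∈ Finset.range (m + 1),
      (∫ t in Set.Ioi (0 : ℝ),
          ((m.choose j : ℝ) * (-1 : ℝ) ^ j / (j.factorial : ℝ)) *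
            (Real.exp (-t) * laguerre n t * t ^ j))
        = (-1 : ℝ) ^ n * ((-1 : ℝ) ^ j * (m.choose j : ℝ) * (j.choose n : ℝ)) := by
    intro j _
    rw [MeasureTheory.integral_const_mul _ _, laguerre_moment n j]
    have hj : (j.factorial : ℝ) ≠ 0 := by exact_mod_cast (Nat.factorial_pos j).ne'
    field_simp
  rw [Finset.sum_congr rfl hterm, ← Finset.mul_sum, alt_choose_choose m n]
  rcases eq_or_ne m n with rfl | hne
  · simp [← pow_add, pow_mul, ← two_mul]
  · simp [hne]

theorem laguerre_orthonormal :
    (∀ m n : ℕ, m ≠ n →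
      ∫ t in Set.Ioi (0 : ℝ), Real.exp (-t) * laguerre m t * laguerre n t = 0) ∧
    (∀ n : ℕ, ∫ t in Set.Ioi (0 : ℝ), Real.exp (-t) * (laguerre n t) ^ 2 = 1) := by
  constructor
  · intro m n hmn
    rw [laguerre_main m n, if_neg hmn]
  · intro n
    have : (∫ t in Set.Ioi (0 : ℝ), Real.exp (-t) * (laguerre n t) ^ 2)
        = ∫ t in Set.Ioi (0 : ℝ), Real.exp (-t) * laguerre n t * laguerre n t := by
      simp_rw [sq, ← mul_assoc]
    rw [this, laguerre_main n n, if_pos rfl]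
end

section
/- Let \kappa > 0 and let v : [0,\infty) \to \mathbb{R} be twice continuously differentiable with v(0) = v'(0) = 0, with v, v', v'' of at most polynomial growth. Then the Laguerre coefficients of v'' satisfy (v'')_n = \kappa^2 \sum_{m=0}^n (n - m + 1) v_m for every n, where v_n = \int_0^\infty e^{-\kappa t} L_n(\kappa t) v(t) dt. -/
open Real MeasureTheory Finset Filter Topology

/-- The Laguerre transform coefficients of `v` with scaling parameter `κ`. -/
noncomputable def laguerreCoeff (κ : ℝ) (v : ℝ → ℝ) (n : ℕ) : ℝ :=
  ∫ t in Set.Ioi (0 : ℝ), Real.exp (-κ * t) * laguerre n (κ * t) * v t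

lemma sum_laguerre_eq (n : ℕ) (x : ℝ) :
    ∑ m ∈ Finset.range n, laguerre m x
      = ∑ j ∈ Finset.range n, (n.choose (j+1) : ℝ) * (-x) ^ j / (Nat.factorial j : ℝ) := by
  induction n with
  | zero => simp
  | succ n ih =>
      rw [Finset.sum_range_succ, ih, laguerre]
      have h1 : ∀ j ∈ Finset.range (n+1), ((n+1).choose (j+1) : ℝ) * (-x) ^ j / (Nat.factorial j : ℝ)
          = (n.choose (j+1) : ℝ) * (-x) ^ j / (Nat.factorial j : ℝ)
            + (n.choose j : ℝ) * (-x) ^ j / (Nat.factorial j : ℝ) := by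
        intro j _
        rw [Nat.choose_succ_succ']
        push_cast
        ring
      rw [Finset.sum_congr rfl h1, Finset.sum_add_distrib]
      congr 1
      rw [Finset.sum_range_succ, Nat.choose_succ_self]
      simp

lemma hasDerivAt_laguerre (n : ℕ) (x : ℝ) :
    HasDerivAt (laguerre n) (laguerre n x - ∑ m ∈ Finset.range (n+1), laguerre m x) x := by
  have key : ∀ k : ℕ, HasDerivAt (fun y : ℝ => (n.choose k : ℝ) * (-y) ^ k / (Nat.factorial k : ℝ))
      ((n.choose k : ℝ) * ((k : ℝ) * (-x) ^ (k-1) * (-1)) / (Nat.factorial k : ℝ)) x := by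
    intro k
    have h : HasDerivAt (fun y : ℝ => (-y) ^ k) ((k : ℝ) * (-x) ^ (k-1) * (-1)) x :=
      (hasDerivAt_pow k (-x)).comp x (hasDerivAt_neg x)
    exact (h.const_mul ((n.choose k : ℝ))).div_const _
  have H := HasDerivAt.fun_sum (fun k (_ : k ∈ Finset.range (n+1)) => key k)
  have : laguerre n = fun y => ∑ k ∈ Finset.range (n+1),
      (n.choose k : ℝ) * (-y) ^ k / (Nat.factorial k : ℝ) := rfl
  rw [this]
  convert H using 1
  case e'_4 => rfl
  case e'_5 => rfl
  rw [← this]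
  have hsum : laguerre n x - ∑ m ∈ Finset.range (n+1), laguerre m x
      = -∑ m ∈ Finset.range n, laguerre m x := by
    rw [Finset.sum_range_succ]; ring
  rw [hsum, sum_laguerre_eq]
  rw [Finset.sum_range_succ']
  have h2 : ∀ j ∈ Finset.range n,
      (n.choose (j+1) : ℝ) * (((j+1 : ℕ) : ℝ) * (-x) ^ ((j+1)-1) * (-1)) / (Nat.factorial (j+1) : ℝ)
      = -((n.choose (j+1) : ℝ) * (-x) ^ j / (Nat.factorial j : ℝ)) := by
    intro j _
    rw [Nat.factorial_succ]
    have hj : (Nat.factorial j : ℝ) ≠ 0 := Nat.cast_ne_zero.2 (Nat.factorial_ne_zero j)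
    push_cast
    field_simp
  rw [Finset.sum_congr rfl h2]
  simp [Finset.sum_neg_distrib]

noncomputable def lag (κ : ℝ) (n : ℕ) (t : ℝ) : ℝ := Real.exp (-κ * t) * laguerre n (κ * t)


lemma hasDerivAt_lag (κ : ℝ) (n : ℕ) (t : ℝ) :
    HasDerivAt (lag κ n) (-κ * ∑ m ∈ Finset.range (n+1), lag κ m t) t := by
  have hin : HasDerivAt (fun s : ℝ => -κ * s) (-κ) t := by
    simpa using (hasDerivAt_id t).const_mul (-κ)
  have hin2 : HasDerivAt (fun s : ℝ => κ * s) κ t := by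
    simpa using (hasDerivAt_id t).const_mul κ
  have h1 : HasDerivAt (fun s : ℝ => Real.exp (-κ * s)) (Real.exp (-κ * t) * (-κ)) t := hin.exp
  have h2 : HasDerivAt (fun s : ℝ => laguerre n (κ * s))
      ((laguerre n (κ*t) - ∑ m ∈ Finset.range (n+1), laguerre m (κ*t)) * κ) t :=
    (hasDerivAt_laguerre n (κ*t)).comp t hin2
  have h := h1.fun_mul h2
  have : lag κ n = fun s => Real.exp (-κ * s) * laguerre n (κ * s) := rfl
  rw [this]
  convert h using 1
  case e'_4 => rfl
  case e'_5 => rfl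
  have hs : ∑ m ∈ Finset.range (n+1), lag κ m t
      = Real.exp (-κ * t) * ∑ m ∈ Finset.range (n+1), laguerre m (κ * t) := by
    rw [Finset.mul_sum]
    exact Finset.sum_congr rfl fun m _ => rfl
  rw [hs]
  ring

lemma laguerre_abs_le (n : ℕ) {x : ℝ} (hx : 0 ≤ x) : |laguerre n x| ≤ (1+x)^n := by
  unfold laguerre
  refine (Finset.abs_sum_le_sum_abs _ _).trans ?_
  have h : ∀ k ∈ Finset.range (n+1), |(n.choose k : ℝ) * (-x)^k / (Nat.factorial k : ℝ)|
      ≤ (n.choose k : ℝ) * x^k := by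
    intro k _
    rw [abs_div, abs_mul, abs_pow, abs_neg, abs_of_nonneg hx, Nat.abs_cast, Nat.abs_cast]
    refine div_le_self (by positivity) ?_
    exact_mod_cast Nat.one_le_iff_ne_zero.mpr (Nat.factorial_ne_zero k)
  refine (Finset.sum_le_sum h).trans ?_
  rw [add_comm 1 x, add_pow]
  refine le_of_eq (Finset.sum_congr rfl fun k _ => ?_)
  ring

lemma poly_le_exp (a : ℝ) (ha : 0 < a) (q : ℕ) :
    ∃ C : ℝ, 0 < C ∧ ∀ t : ℝ, 0 ≤ t → (1+t)^q ≤ C * Real.exp (a * t) := by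
  set c : ℝ := min 1 (a / (q+1)) with hcdef
  have hc0 : 0 < c := lt_min one_pos (by positivity)
  refine ⟨c⁻¹ ^ q, by positivity, fun t ht => ?_⟩
  have hc1 : c ≤ 1 := min_le_left _ _
  have hc2 : c ≤ a/(q+1) := min_le_right _ _
  have h1 : c * (1+t) ≤ 1 + a/(q+1) * t := by nlinarith
  have h2 : c * (1+t) ≤ Real.exp (a/(q+1) * t) := by
    have := Real.add_one_le_exp (a/(q+1)*t); linarith
  have h3 : (1+t) ≤ c⁻¹ * Real.exp (a/(q+1) * t) := by
    rw [← mul_le_mul_iff_right₀ hc0, ← mul_assoc, mul_inv_cancel₀ hc0.ne', one_mul]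
    exact h2
  have h4 : (1+t)^q ≤ (c⁻¹ * Real.exp (a/(q+1)*t))^q := pow_le_pow_left₀ (by linarith) h3 q
  refine h4.trans ?_
  rw [mul_pow, ← Real.exp_nat_mul]
  refine mul_le_mul_of_nonneg_left ?_ (by positivity)
  rw [Real.exp_le_exp]
  have hqd : (q:ℝ) * (a/(q+1)) ≤ a := by
    rw [mul_div_assoc', div_le_iff₀ (by positivity)]
    nlinarith [Nat.cast_nonneg (α := ℝ) q]
  calc (q:ℝ) * (a/(q+1) * t) = ((q:ℝ) * (a/(q+1))) * t := by ring
    _ ≤ a * t := mul_le_mul_of_nonneg_right hqd ht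

lemma lag_mul_bound (κ : ℝ) (hκ : 0 < κ) (n : ℕ) (u : ℝ → ℝ)
    (hg : ∃ C p : ℝ, ∀ t : ℝ, 0 ≤ t → |u t| ≤ C * (1 + t) ^ p) :
    ∃ C : ℝ, 0 ≤ C ∧ ∀ t : ℝ, 0 ≤ t → |lag κ n t * u t| ≤ C * Real.exp (-(κ/2) * t) := by
  obtain ⟨C, p, hC⟩ := hg
  have hC0 : 0 ≤ C := by
    have h := hC 0 le_rfl
    have h0 : (0:ℝ) ≤ C * (1+0:ℝ)^p := le_trans (abs_nonneg _) h
    simpa using h0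
  obtain ⟨B, hB0, hB⟩ := poly_le_exp (κ/2) (by positivity) (n + ⌈p⌉₊)
  set M : ℝ := max 1 κ with hM
  refine ⟨C * M ^ n * B, by positivity, fun t ht => ?_⟩
  have h1t : (0:ℝ) ≤ 1 + t := by linarith
  have h1t1 : (1:ℝ) ≤ 1 + t := by linarith
  have hu : |u t| ≤ C * (1+t) ^ (⌈p⌉₊ : ℕ) := by
    refine (hC t ht).trans ?_
    have h5 : (1+t) ^ p ≤ (1+t) ^ ((⌈p⌉₊ : ℕ) : ℝ) :=
      Real.rpow_le_rpow_of_exponent_le h1t1 (Nat.le_ceil p)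
    rw [Real.rpow_natCast] at h5
    exact mul_le_mul_of_nonneg_left h5 hC0
  have h1M : (1:ℝ) ≤ M := le_max_left _ _
  have hκM : κ ≤ M := le_max_right _ _
  have hlagb : |lag κ n t| ≤ Real.exp (-κ * t) * (M * (1+t)) ^ n := by
    rw [lag, abs_mul, abs_of_pos (Real.exp_pos _)]
    refine mul_le_mul_of_nonneg_left ?_ (Real.exp_pos _).le
    refine (laguerre_abs_le n (by positivity)).trans ?_
    refine pow_le_pow_left₀ (by positivity) ?_ n
    nlinarith
  calc |lag κ n t * u t| = |lag κ n t| * |u t| := abs_mul _ _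
    _ ≤ (Real.exp (-κ*t) * (M*(1+t))^n) * (C * (1+t)^(⌈p⌉₊ : ℕ)) :=
        mul_le_mul hlagb hu (abs_nonneg _) (by positivity)
    _ = C * M^n * ((1+t)^(n + ⌈p⌉₊) * Real.exp (-κ*t)) := by rw [mul_pow, pow_add]; ring
    _ ≤ C * M^n * ((B * Real.exp (κ/2 * t)) * Real.exp (-κ*t)) := by
        refine mul_le_mul_of_nonneg_left
          (mul_le_mul_of_nonneg_right (hB t ht) (Real.exp_pos _).le) (by positivity)
    _ = C * M^n * B * Real.exp (-(κ/2) * t) := by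
        rw [mul_assoc B, ← Real.exp_add]
        have h9 : κ/2*t + -κ*t = -(κ/2)*t := by ring
        rw [h9]; ring

lemma lag_continuous (κ : ℝ) (n : ℕ) : Continuous (lag κ n) := by
  have hL : Continuous (laguerre n) := by
    unfold laguerre
    exact continuous_finset_sum _ fun k _ =>
      (Continuous.div_const (continuous_const.mul (continuous_id.neg.pow k)) _)
  exact ((Real.continuous_exp.comp (continuous_const.mul continuous_id))).mul
    (hL.comp (continuous_const.mul continuous_id))

lemma lag_mul_integrableOn (κ : ℝ) (hκ : 0 < κ) (n : ℕ) (u : ℝ → ℝ) (hu : Continuous u)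
    (hg : ∃ C p : ℝ, ∀ t : ℝ, 0 ≤ t → |u t| ≤ C * (1 + t) ^ p) :
    IntegrableOn (fun t => lag κ n t * u t) (Set.Ioi (0:ℝ)) := by
  obtain ⟨C, hC0, hC⟩ := lag_mul_bound κ hκ n u hg
  have hint : IntegrableOn (fun t => C * Real.exp (-(κ/2) * t)) (Set.Ioi (0:ℝ)) :=
    (exp_neg_integrableOn_Ioi 0 (by positivity)).const_mul C
  refine hint.mono' ?_ ?_
  · exact ((lag_continuous κ n).mul hu).aestronglyMeasurable.restrict
  · rw [ae_restrict_iff' measurableSet_Ioi]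
    exact ae_of_all _ fun t ht => by
      rw [Real.norm_eq_abs]; exact hC t (le_of_lt ht)

lemma lag_mul_tendsto (κ : ℝ) (hκ : 0 < κ) (n : ℕ) (u : ℝ → ℝ)
    (hg : ∃ C p : ℝ, ∀ t : ℝ, 0 ≤ t → |u t| ≤ C * (1 + t) ^ p) :
    Tendsto (fun t => lag κ n t * u t) atTop (𝓝 0) := by
  obtain ⟨C, hC0, hC⟩ := lag_mul_bound κ hκ n u hg
  have h1 : Tendsto (fun t : ℝ => C * Real.exp (-(κ/2) * t)) atTop (𝓝 (C * 0)) := by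
    refine Tendsto.const_mul C ?_
    have h := tendsto_exp_neg_atTop_nhds_zero.comp
      (tendsto_id.const_mul_atTop (show (0:ℝ) < κ/2 by positivity))
    exact h.congr fun t => by simp [neg_mul, Function.comp]
  rw [mul_zero] at h1
  exact squeeze_zero_norm'
    (by filter_upwards [eventually_ge_atTop (0:ℝ)] with t ht
        rw [Real.norm_eq_abs]; exact hC t ht) h1

lemma laguerreCoeff_deriv (κ : ℝ) (hκ : 0 < κ) (u : ℝ → ℝ)
    (hu : ContDiff ℝ 1 u) (hu0 : u 0 = 0)
    (hg : ∃ C p : ℝ, ∀ t : ℝ, 0 ≤ t → |u t| ≤ C * (1 + t) ^ p)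
    (hg' : ∃ C p : ℝ, ∀ t : ℝ, 0 ≤ t → |deriv u t| ≤ C * (1 + t) ^ p)
    (n : ℕ) :
    laguerreCoeff κ (deriv u) n = κ * ∑ m ∈ Finset.range (n+1), laguerreCoeff κ u m := by
  have hu' : ∀ t, HasDerivAt u (deriv u t) t := fun t =>
    (hu.differentiable one_ne_zero t).hasDerivAt
  have hucont : Continuous u := hu.continuous
  have hu'cont : Continuous (deriv u) := hu.continuous_deriv le_rfl
  set F : ℝ → ℝ := fun t => lag κ n t * u t with hFdef
  have hFderiv : ∀ t, HasDerivAt F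
      (lag κ n t * deriv u t - κ * ∑ m ∈ Finset.range (n+1), lag κ m t * u t) t := by
    intro t
    have h := (hasDerivAt_lag κ n t).fun_mul (hu' t)
    convert h using 1
    case e'_4 => rfl
    case e'_5 => rfl
    rw [← Finset.sum_mul]
    ring
  have hi1 : IntegrableOn (fun t => lag κ n t * deriv u t) (Set.Ioi (0:ℝ)) :=
    lag_mul_integrableOn κ hκ n _ hu'cont hg'
  have hi2 : ∀ m : ℕ, IntegrableOn (fun t => lag κ m t * u t) (Set.Ioi (0:ℝ)) := fun m =>
    lag_mul_integrableOn κ hκ m u hucont hg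
  have hisum : Integrable (fun t => ∑ m ∈ Finset.range (n+1), lag κ m t * u t)
      (volume.restrict (Set.Ioi (0:ℝ))) :=
    integrable_finset_sum _ fun m _ => hi2 m
  have hiG : IntegrableOn (fun t => lag κ n t * deriv u t
      - κ * ∑ m ∈ Finset.range (n+1), lag κ m t * u t) (Set.Ioi (0:ℝ)) :=
    hi1.sub (hisum.const_mul κ)
  have htend : Tendsto F atTop (𝓝 0) := lag_mul_tendsto κ hκ n u hg
  have hFcont : ContinuousWithinAt F (Set.Ici (0:ℝ)) 0 :=
    (((lag_continuous κ n).mul hucont).continuousAt).continuousWithinAt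
  have h0 := integral_Ioi_of_hasDerivAt_of_tendsto hFcont
    (fun x _ => hFderiv x) hiG htend
  have hF0 : F 0 = 0 := by simp [hFdef, hu0]
  rw [hF0, sub_zero] at h0
  rw [integral_sub hi1 (hisum.const_mul κ), integral_const_mul,
    integral_finset_sum _ (fun m _ => hi2 m)] at h0
  have e1 : laguerreCoeff κ (deriv u) n = ∫ t in Set.Ioi (0:ℝ), lag κ n t * deriv u t := rfl
  have e2 : ∀ m ∈ Finset.range (n+1), laguerreCoeff κ u m
      = ∫ t in Set.Ioi (0:ℝ), lag κ m t * u t := fun m _ => rfl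
  rw [e1, Finset.sum_congr rfl e2]
  linarith

lemma sum_sum_eq (a : ℕ → ℝ) (n : ℕ) :
    ∑ m ∈ Finset.range (n+1), ∑ j ∈ Finset.range (m+1), a j
      = ∑ j ∈ Finset.range (n+1), ((n:ℝ) - (j:ℝ) + 1) * a j := by
  induction n with
  | zero => simp
  | succ n ih =>
      have h1 : ∑ j ∈ Finset.range (n+1+1), (((n+1:ℕ):ℝ) - (j:ℝ) + 1) * a j
          = (∑ j ∈ Finset.range (n+1), ((n:ℝ) - (j:ℝ) + 1) * a j)
            + ∑ j ∈ Finset.range (n+1+1), a j := by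
        rw [Finset.sum_range_succ, Finset.sum_range_succ (f := a)]
        rw [show (∑ j ∈ Finset.range (n+1), (((n+1:ℕ):ℝ) - (j:ℝ) + 1) * a j)
            = ∑ j ∈ Finset.range (n+1), (((n:ℝ) - (j:ℝ) + 1) * a j + a j) from
          Finset.sum_congr rfl (fun j _ => by push_cast; ring)]
        rw [Finset.sum_add_distrib]
        push_cast; ring
      rw [Finset.sum_range_succ
        (f := fun m => ∑ j ∈ Finset.range (m+1), a j), ih, h1]

theorem laguerre_transform_second_deriv (κ : ℝ) (hκ : 0 < κ) (v : ℝ → ℝ)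
    (hv : ContDiff ℝ 2 v) (hv0 : v 0 = 0) (hv0' : deriv v 0 = 0)
    (hgrowth : ∃ C p : ℝ, ∀ t : ℝ, 0 ≤ t → |v t| ≤ C * (1 + t) ^ p)
    (hgrowth' : ∃ C p : ℝ, ∀ t : ℝ, 0 ≤ t → |deriv v t| ≤ C * (1 + t) ^ p)
    (hgrowth'' : ∃ C p : ℝ, ∀ t : ℝ, 0 ≤ t → |deriv (deriv v) t| ≤ C * (1 + t) ^ p)
    (n : ℕ) :
    laguerreCoeff κ (deriv (deriv v)) n
      = κ ^ 2 * ∑ m ∈ Finset.range (n + 1),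
          ((n : ℝ) - (m : ℝ) + 1) * laguerreCoeff κ v m := by
  have hv1 : ContDiff ℝ 1 v := hv.of_le (by norm_num)
  have hdv : ContDiff ℝ 1 (deriv v) := by
    have h11 : (2 : WithTop ℕ∞) = 1 + 1 := by norm_num
    rw [h11] at hv
    exact (contDiff_succ_iff_deriv.mp hv).2.2
  rw [laguerreCoeff_deriv κ hκ (deriv v) hdv hv0' hgrowth' hgrowth'' n]
  rw [Finset.sum_congr rfl (fun m _ =>
    laguerreCoeff_deriv κ hκ v hv1 hv0 hgrowth hgrowth' m)]
  rw [← Finset.mul_sum, sum_sum_eq (laguerreCoeff κ v) n]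
  ring
end

section
/- For every natural number n and real t, t^2 L_n(t) = \sum_{k=-2}^{2} \chi_{k,n} L_{n+k}(t), where \chi_{-2,n} = n(n-1), \chi_{-1,n} = -4n^2, \chi_{0,n} = 2(3n^2 + 3n + 1), \chi_{1,n} = -4(n+1)^2, \chi_{2,n} = (n+1)(n+2), and terms with negative index n+k are interpreted as zero. -/
/-- Laguerre polynomial extended by zero to negative integer indices. -/
noncomputable def laguerreZ (m : ℤ) (t : ℝ) : ℝ :=
  if 0 ≤ m then laguerre m.toNat t else 0

/-- The coefficients `χ_{k,n}` in the identity `t² L_n(t) = ∑_{k=-2}^2 χ_{k,n} L_{n+k}(t)`. -/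
def chiCoeff (k : ℤ) (n : ℕ) : ℝ :=
  if k = -2 then (n : ℝ) * ((n : ℝ) - 1)
  else if k = -1 then -4 * (n : ℝ) ^ 2
  else if k = 0 then 2 * (3 * (n : ℝ) ^ 2 + 3 * (n : ℝ) + 1)
  else if k = 1 then -4 * ((n : ℝ) + 1) ^ 2
  else ((n : ℝ) + 1) * ((n : ℝ) + 2)

lemma natkey (m k : ℕ) :
    (m+2)*Nat.choose (m+2) (k+1) + (m+1)*Nat.choose m (k+1)
      = (2*m+3)*Nat.choose (m+1) (k+1) + (k+1)*Nat.choose (m+1) k := by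
  rw [Nat.choose_succ_succ (m+1) k, Nat.choose_succ_succ m k]
  rcases le_or_gt k (m+1) with h | h
  · have h2 := Nat.choose_mul_succ_eq m k
    nlinarith [h2, Nat.sub_add_cancel h]
  · have h0 : Nat.choose m k = 0 := Nat.choose_eq_zero_of_lt (by omega)
    have h1 : Nat.choose (m+1) k = 0 := Nat.choose_eq_zero_of_lt (by omega)
    have h2 : Nat.choose m (k+1) = 0 := Nat.choose_eq_zero_of_lt (by omega)
    simp [h0, h1, h2]

lemma laguerre_eq_sum (n N : ℕ) (h : n < N) (t : ℝ) :
    laguerre n t = ∑ k ∈ Finset.range N, (n.choose k : ℝ) * (-t) ^ k / (k.factorial : ℝ) := by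
  rw [laguerre]
  apply Finset.sum_subset
  · intro x hx; simp only [Finset.mem_range] at *; omega
  · intro x hx hx'
    simp only [Finset.mem_range] at *
    rw [Nat.choose_eq_zero_of_lt (by omega)]
    simp

lemma t_mul_laguerre (n : ℕ) (t : ℝ) :
    t * laguerre n t = ∑ k ∈ Finset.range (n+2),
      -((n.choose (k-1) : ℝ) * k) * (-t)^k / (k.factorial : ℝ) := by
  rw [Finset.sum_range_succ' _ (n+1)]
  simp only [Nat.add_sub_cancel, Nat.cast_zero, mul_zero, neg_zero, pow_zero, zero_mul,
    zero_div, add_zero, mul_one]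
  rw [laguerre, Finset.mul_sum]
  apply Finset.sum_congr rfl
  intro k _
  have hf : ((k+1).factorial : ℝ) = (k+1) * (k.factorial : ℝ) := by
    rw [Nat.factorial_succ]; push_cast; ring
  have hk : (k.factorial : ℝ) ≠ 0 := Nat.cast_ne_zero.mpr (Nat.factorial_ne_zero k)
  have hk1 : ((k:ℝ)+1) ≠ 0 := by positivity
  rw [hf]
  push_cast
  field_simp
  ring

lemma laguerre_rec (n : ℕ) (t : ℝ) :
    t * laguerre n t = (2*(n:ℝ)+1) * laguerre n t - ((n:ℝ)+1) * laguerre (n+1) t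
      - (n:ℝ) * laguerre (n-1) t := by
  cases n with
  | zero => simp [laguerre, Finset.sum_range_succ]
  | succ m =>
    simp only [Nat.add_sub_cancel]
    rw [t_mul_laguerre, laguerre_eq_sum (m+1) (m+3) (by omega),
      laguerre_eq_sum m (m+3) (by omega), laguerre_eq_sum (m+1+1) (m+3) (by omega),
      Finset.mul_sum, Finset.mul_sum, Finset.mul_sum, ← Finset.sum_sub_distrib,
      ← Finset.sum_sub_distrib]
    apply Finset.sum_congr rfl
    intro k _
    have hk : (k.factorial : ℝ) ≠ 0 := Nat.cast_ne_zero.mpr (Nat.factorial_ne_zero k)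
    have key : -((((m+1).choose (k-1)):ℝ) * k)
        = (2*((m:ℝ)+1)+1)*(((m+1).choose k : ℕ):ℝ) - (((m:ℝ)+1)+1)*(((m+1+1).choose k : ℕ):ℝ)
          - ((m:ℝ)+1)*((m.choose k : ℕ):ℝ) := by
      cases k with
      | zero => simp; ring
      | succ j =>
        have h := natkey m j
        simp only [Nat.add_sub_cancel]
        have h' : ((m:ℝ)+2)*(((m+2).choose (j+1) : ℕ):ℝ) + ((m:ℝ)+1)*((m.choose (j+1) : ℕ):ℝ)
            = (2*(m:ℝ)+3)*(((m+1).choose (j+1) : ℕ):ℝ) + ((j:ℝ)+1)*(((m+1).choose j : ℕ):ℝ) := by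
          exact_mod_cast congrArg (Nat.cast : ℕ → ℝ) h
        push_cast at h' ⊢
        linarith
    push_cast at key ⊢
    linear_combination ((-t)^k / (k.factorial:ℝ)) * key

lemma laguerre_rec' (n : ℕ) (t : ℝ) :
    t * laguerre (n+1) t = (2*(n:ℝ)+3) * laguerre (n+1) t - ((n:ℝ)+2) * laguerre (n+2) t
      - ((n:ℝ)+1) * laguerre n t := by
  have h := laguerre_rec (n+1) t
  simp only [Nat.add_sub_cancel, show n+1+1 = n+2 from rfl] at h
  push_cast at h
  linarith

lemma laguerreZ_coe (j : ℕ) (t : ℝ) : laguerreZ (j : ℤ) t = laguerre j t := by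
  simp [laguerreZ]

theorem t_sq_mul_laguerre (n : ℕ) (t : ℝ) :
    t ^ 2 * laguerre n t
      = ∑ k ∈ Finset.Icc (-2 : ℤ) 2, chiCoeff k n * laguerreZ ((n : ℤ) + k) t := by
  have hIcc : Finset.Icc (-2 : ℤ) 2 = {-2, -1, 0, 1, 2} := by decide
  rw [hIcc]
  rw [Finset.sum_insert (by decide), Finset.sum_insert (by decide),
    Finset.sum_insert (by decide), Finset.sum_insert (by decide), Finset.sum_singleton]
  simp only [chiCoeff]
  norm_num
  match n with
  | 0 =>
    norm_num [laguerreZ, show ((2:ℤ).toNat) = 2 from rfl, show ((3:ℤ).toNat) = 3 from rfl,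
      laguerre, Finset.sum_range_succ, Nat.factorial]
    ring
  | 1 =>
    norm_num [laguerreZ, show ((2:ℤ).toNat) = 2 from rfl, show ((3:ℤ).toNat) = 3 from rfl,
      laguerre, Finset.sum_range_succ, Nat.factorial]
    ring
  | (m+2) =>
    rw [show ((m+2:ℕ):ℤ) + -2 = ((m:ℕ):ℤ) by push_cast; ring,
      show ((m+2:ℕ):ℤ) + -1 = ((m+1:ℕ):ℤ) by push_cast; ring,
      show ((m+2:ℕ):ℤ) + 1 = ((m+3:ℕ):ℤ) by push_cast; ring,
      show ((m+2:ℕ):ℤ) + 2 = ((m+4:ℕ):ℤ) by push_cast; ring,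
      laguerreZ_coe, laguerreZ_coe, laguerreZ_coe, laguerreZ_coe, laguerreZ_coe]
    have h1 := laguerre_rec' m t
    have h2 := laguerre_rec' (m+1) t
    have h3 := laguerre_rec' (m+2) t
    simp only [show m+1+1 = m+2 from rfl, show m+1+2 = m+3 from rfl,
      show m+2+1 = m+3 from rfl, show m+2+2 = m+4 from rfl] at h2 h3
    push_cast at h1 h2 h3 ⊢
    linear_combination t*h2 + (2*(m:ℝ)+5)*h2 - ((m:ℝ)+3)*h3 - ((m:ℝ)+2)*h1
end

section
/- Let \kappa > 0 and suppose v : [0,\infty) \to \mathbb{R} is continuous, v(0) = 0, and v has at most polynomial growth, and suppose the Laguerre coefficients v_n = \int_0^\infty e^{-\kappa t} L_n(\kappa t) v(t) dt vanish for all n \geq 0. Then v = 0 on [0,\infty). -/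
open Real MeasureTheory

open Set Filter


-- poly * exp decay tendsto
lemma aux_tendsto_exp_poly (a : ℝ) (ha : 0 < a) (q : ℕ) :
    Tendsto (fun t : ℝ => Real.exp (-a * t) * (1 + t) ^ q) atTop (nhds 0) := by
  have hP := Polynomial.tendsto_div_exp_atTop ((1 + (Polynomial.C (a⁻¹)) * Polynomial.X) ^ q)
  have hcomp : Tendsto (fun t : ℝ => a * t) atTop atTop :=
    Tendsto.const_mul_atTop ha tendsto_id
  have := hP.comp hcomp
  refine this.congr fun t => ?_
  simp only [Function.comp_apply, Polynomial.eval_pow, Polynomial.eval_add, Polynomial.eval_one,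
    Polynomial.eval_mul, Polynomial.eval_C, Polynomial.eval_X]
  rw [inv_mul_cancel_left₀ ha.ne']
  rw [div_eq_mul_inv, ← Real.exp_neg, mul_comm, neg_mul]

-- master integrability
lemma aux_integrable_exp_poly (a : ℝ) (ha : 0 < a) (q : ℕ) :
    IntegrableOn (fun t : ℝ => Real.exp (-a * t) * (1 + t) ^ q) (Set.Ioi 0) := by
  apply integrable_of_isBigO_exp_neg (half_pos ha) (a := 0)
  · fun_prop
  · have h2 : Tendsto (fun t : ℝ => Real.exp (-(a/2) * t) * (1 + t) ^ q) atTop (nhds 0) :=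
      aux_tendsto_exp_poly (a/2) (half_pos ha) q
    have : (fun t : ℝ => Real.exp (-a * t) * (1 + t) ^ q) =o[atTop]
        fun t => Real.exp (-(a/2) * t) := by
      apply Asymptotics.isLittleO_of_tendsto (fun x hx => absurd hx (Real.exp_ne_zero _).elim)
      refine h2.congr fun t => ?_
      rw [eq_div_iff (Real.exp_ne_zero _), mul_right_comm, ← Real.exp_add]
      ring_nf
    exact this.isBigO


section

variable {v : ℝ → ℝ} {C : ℝ} {q : ℕ}

-- pointwise bound t^k exp(-s t)|v t| ≤ C * k! * (2/s)^k * (exp(-(s/2) t) (1+t)^q)  materialized as: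
lemma aux_ptbound (hC0 : 0 ≤ C) (hC : ∀ t, 0 ≤ t → |v t| ≤ C * (1 + t) ^ q)
    {s : ℝ} (hs : 0 < s) (k : ℕ) {t : ℝ} (ht : 0 ≤ t) :
    |t ^ k * (Real.exp (-s * t) * v t)| ≤
      (C * (k.factorial : ℝ) * (s/2)⁻¹ ^ k) * (Real.exp (-(s/2) * t) * (1 + t) ^ q) := by
  have h1 : t ^ k ≤ (k.factorial : ℝ) * (s/2)⁻¹ ^ k * Real.exp ((s/2) * t) := by
    have := Real.pow_div_factorial_le_exp (x := (s/2) * t)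
      (by positivity) k
    rw [div_le_iff₀ (by positivity), mul_pow] at this
    calc t ^ k = ((s/2)⁻¹ ^ k * (s/2) ^ k) * t ^ k := by
          rw [← mul_pow, inv_mul_cancel₀ (by positivity), one_pow, one_mul]
      _ = (s/2)⁻¹ ^ k * ((s/2) ^ k * t ^ k) := by ring
      _ ≤ (s/2)⁻¹ ^ k * (Real.exp ((s/2) * t) * (k.factorial : ℝ)) := by
          gcongr <;> positivity
      _ = _ := by ring
  have h2 : |v t| ≤ C * (1 + t) ^ q := hC t ht
  have habs : |t ^ k * (Real.exp (-s * t) * v t)| = t ^ k * Real.exp (-s * t) * |v t| := by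
    rw [abs_mul, abs_mul, abs_of_nonneg (pow_nonneg ht k), abs_of_nonneg (Real.exp_pos _).le,
      mul_assoc]
  rw [habs]
  calc t ^ k * Real.exp (-s * t) * |v t|
      ≤ ((k.factorial : ℝ) * (s/2)⁻¹ ^ k * Real.exp ((s/2) * t)) * Real.exp (-s * t) *
        (C * (1 + t) ^ q) := by
        gcongr <;> positivity
    _ = (C * (k.factorial : ℝ) * (s/2)⁻¹ ^ k) * ((Real.exp ((s/2) * t) * Real.exp (-s * t)) * (1 + t) ^ q) := by
        ring
    _ = _ := by rw [← Real.exp_add]; ring_nf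

lemma aux_integrable_v (hv : Continuous v) (hC0 : 0 ≤ C)
    (hC : ∀ t, 0 ≤ t → |v t| ≤ C * (1 + t) ^ q) {s : ℝ} (hs : 0 < s) (k : ℕ) :
    IntegrableOn (fun t => t ^ k * (Real.exp (-s * t) * v t)) (Set.Ioi (0:ℝ)) := by
  have hmaj := (aux_integrable_exp_poly (s/2) (half_pos hs) q).const_mul
    (C * (k.factorial : ℝ) * (s/2)⁻¹ ^ k)
  refine Integrable.mono' hmaj ?_ ?_
  · exact (((continuous_pow k).mul ((Real.continuous_exp.comp (continuous_const.mul continuous_id)).mul hv))).aestronglyMeasurable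
  · rw [ae_restrict_iff' measurableSet_Ioi]
    exact Eventually.of_forall fun t ht =>
      by simpa [norm_eq_abs, abs_mul, abs_of_nonneg (le_of_lt (show (0:ℝ) < t from ht)),
        abs_of_nonneg (Real.exp_pos (-s*t)).le] using aux_ptbound hC0 hC hs k (le_of_lt (show (0:ℝ) < t from ht))

end
section
variable {v : ℝ → ℝ} {C : ℝ} {q : ℕ}

lemma aux_hasSum (hv : Continuous v) (hC0 : 0 ≤ C)
    (hC : ∀ t, 0 ≤ t → |v t| ≤ C * (1 + t) ^ q) {s u : ℝ} (hs : 0 < s) (hu : |u| < s / 2) :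
    HasSum (fun k : ℕ => ((-u) ^ k / (k.factorial : ℝ)) *
        ∫ t in Set.Ioi (0:ℝ), t ^ k * (Real.exp (-s * t) * v t))
      (∫ t in Set.Ioi (0:ℝ), Real.exp (-(s + u) * t) * v t) := by
  set F : ℕ → ℝ → ℝ := fun k t => ((-u) ^ k / (k.factorial : ℝ)) * (t ^ k * (Real.exp (-s * t) * v t)) with hF
  have hFint : ∀ k, Integrable (F k) (volume.restrict (Set.Ioi 0)) := fun k =>
    (aux_integrable_v hv hC0 hC hs k).const_mul _
  set G : ℝ → ℝ := fun t => Real.exp (-(s/2) * t) * (1 + t) ^ q with hG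
  have hGint : IntegrableOn G (Set.Ioi 0) := aux_integrable_exp_poly (s/2) (half_pos hs) q
  set K : ℝ := ∫ t in Set.Ioi (0:ℝ), G t with hK
  set r : ℝ := |u| / (s/2) with hr
  have hr0 : 0 ≤ r := by positivity
  have hr1 : r < 1 := by
    rw [hr, div_lt_one (half_pos hs)]; exact hu
  have hnormbound : ∀ k : ℕ, (∫ t in Set.Ioi (0:ℝ), ‖F k t‖) ≤ (C * K) * r ^ k := by
    intro k
    have hb : ∀ t ∈ Set.Ioi (0:ℝ), ‖F k t‖ ≤ (C * r ^ k) * G t := by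
      intro t ht
      have hpt := aux_ptbound hC0 hC hs k (le_of_lt ht)
      have : ‖F k t‖ = (|u| ^ k / (k.factorial : ℝ)) * |t ^ k * (Real.exp (-s * t) * v t)| := by
        rw [hF, norm_eq_abs, abs_mul, abs_div, abs_pow, abs_neg, Nat.abs_cast]
      rw [this]
      calc (|u| ^ k / (k.factorial : ℝ)) * |t ^ k * (Real.exp (-s * t) * v t)|
          ≤ (|u| ^ k / (k.factorial : ℝ)) *
            ((C * (k.factorial : ℝ) * (s/2)⁻¹ ^ k) * G t) := by
            gcongr <;> positivity
        _ = (C * (|u| * (s/2)⁻¹) ^ k) * G t * ((k.factorial : ℝ) / (k.factorial : ℝ)) := by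
            rw [mul_pow]; ring
        _ = (C * r ^ k) * G t := by
            rw [div_self (Nat.cast_ne_zero.mpr (Nat.factorial_ne_zero k)), mul_one, hr,
              div_eq_mul_inv |u|]
    calc (∫ t in Set.Ioi (0:ℝ), ‖F k t‖)
        ≤ ∫ t in Set.Ioi (0:ℝ), (C * r ^ k) * G t := by
          refine setIntegral_mono_on (hFint k).norm (hGint.const_mul _) measurableSet_Ioi hb
      _ = (C * K) * r ^ k := by rw [MeasureTheory.integral_const_mul]; ring
  have hsum : Summable (fun k : ℕ => ∫ t in Set.Ioi (0:ℝ), ‖F k t‖) := by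
    refine Summable.of_nonneg_of_le (fun k => integral_nonneg fun t => norm_nonneg _)
      hnormbound ?_
    exact (summable_geometric_of_lt_one hr0 hr1).mul_left _
  have hps : ∀ t : ℝ, HasSum (fun k => F k t) (Real.exp (-(s + u) * t) * v t) := by
    intro t
    have he : HasSum (fun k : ℕ => (-u * t) ^ k / (k.factorial : ℝ)) (Real.exp (-u * t)) := by
      rw [Real.exp_eq_exp_ℝ]
      exact NormedSpace.expSeries_div_hasSum_exp (-u * t)
    have := he.mul_right (Real.exp (-s * t) * v t)
    have heq : (fun k : ℕ => (-u * t) ^ k / (k.factorial : ℝ) * (Real.exp (-s * t) * v t))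
        = fun k => F k t := by
      funext k; rw [hF]; simp only [mul_pow]; ring
    rw [heq] at this
    rw [show (-(s + u) * t) = (-u * t) + (-s * t) by ring, Real.exp_add, mul_assoc]
    exact this
  have hmain := MeasureTheory.hasSum_integral_of_summable_integral_norm hFint hsum
  have h1 : (fun k => ∫ t in Set.Ioi (0:ℝ), F k t)
      = fun k : ℕ => ((-u) ^ k / (k.factorial : ℝ)) *
        ∫ t in Set.Ioi (0:ℝ), t ^ k * (Real.exp (-s * t) * v t) := by
    funext k; rw [hF, MeasureTheory.integral_const_mul]
  have h2 : (∫ t in Set.Ioi (0:ℝ), ∑' k, F k t)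
      = ∫ t in Set.Ioi (0:ℝ), Real.exp (-(s + u) * t) * v t := by
    refine setIntegral_congr_fun measurableSet_Ioi fun t _ => (hps t).tsum_eq
  rw [h1, h2] at hmain
  exact hmain

end
lemma aux_coeff_zero {c : ℕ → ℝ} {δ : ℝ} (hδ : 0 < δ)
    (H : ∀ u : ℝ, |u| < δ → HasSum (fun k => c k * u ^ k) 0) : ∀ k, c k = 0 := by
  set p := FormalMultilinearSeries.ofScalars ℝ c with hp
  have hδ2 : (0:ℝ) < δ / 2 := half_pos hδ
  set rr : NNReal := ⟨δ/2, hδ2.le⟩ with hrr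
  have hsummable : Summable (fun n => ‖p n‖ * (rr:ℝ) ^ n) := by
    have h1 := (H (δ/2) (by rw [abs_of_pos hδ2]; linarith)).summable
    have h2 := h1.abs
    refine h2.congr fun n => ?_
    rw [abs_mul, abs_pow, abs_of_pos hδ2, hp, FormalMultilinearSeries.ofScalars_norm,
      Real.norm_eq_abs]
    rfl
  have hball : HasFPowerSeriesOnBall (fun _ : ℝ => (0:ℝ)) p 0 rr := by
    refine ⟨p.le_radius_of_summable_norm hsummable, ?_, ?_⟩
    · exact_mod_cast hδ2
    · intro y hy
      rw [EMetric.mem_ball, edist_zero_right] at hy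
      have hy' : |y| < δ := by
        have : (‖y‖₊ : ℝ) < (rr : ℝ) := by exact_mod_cast hy
        rw [coe_nnnorm, norm_eq_abs] at this
        calc |y| < δ/2 := this
          _ < δ := by linarith
      have hsum := H y hy'
      have heq : (fun k => c k * y ^ k) = fun n => p n fun _ => y := by
        funext n
        rw [hp, FormalMultilinearSeries.ofScalars_apply_eq, smul_eq_mul]
      rw [heq] at hsum
      simpa using hsum
  have hzero : p = 0 := hball.hasFPowerSeriesAt.eq_zero
  intro k
  have := congrFun hzero k
  rw [hp] at this
  have h2 := congrArg (fun (m : ContinuousMultilinearMap ℝ (fun _ : Fin k => ℝ) ℝ) => m (fun _ => 1)) this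
  simp only [FormalMultilinearSeries.ofScalars_apply_eq] at h2
  simpa using h2
-- change of variables: x = exp(-t)
lemma aux_cov (G : ℝ → ℝ) :
    ∫ x in Set.Ioo (0:ℝ) 1, G x = ∫ t in Set.Ioi (0:ℝ), Real.exp (-t) * G (Real.exp (-t)) := by
  have himg : (fun t : ℝ => Real.exp (-t)) '' (Set.Ioi 0) = Set.Ioo 0 1 := by
    ext y
    constructor
    · rintro ⟨t, ht, rfl⟩
      exact ⟨Real.exp_pos _, by
        rw [show (1:ℝ) = Real.exp 0 by rw [Real.exp_zero]]
        exact Real.exp_lt_exp.mpr (by simpa using ht)⟩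
    · rintro ⟨hy0, hy1⟩
      refine ⟨-Real.log y, ?_, by simp [Real.exp_log hy0]⟩
      simpa using Real.log_neg hy0 hy1
  have hderiv : ∀ t ∈ Set.Ioi (0:ℝ),
      HasDerivWithinAt (fun t : ℝ => Real.exp (-t)) (-Real.exp (-t)) (Set.Ioi 0) t := by
    intro t _
    simpa using (hasDerivAt_neg t).exp.hasDerivWithinAt
  have hinj : Set.InjOn (fun t : ℝ => Real.exp (-t)) (Set.Ioi 0) := fun a _ b _ h => by
    have := Real.exp_injective h
    linarith [neg_injective this]
  have := integral_image_eq_integral_abs_deriv_smul measurableSet_Ioi hderiv hinj G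
  rw [himg] at this
  rw [this]
  refine setIntegral_congr_fun measurableSet_Ioi fun t _ => ?_
  rw [abs_neg, abs_of_pos (Real.exp_pos _), smul_eq_mul]
-- Weierstrass: continuous function on [0,1] with vanishing moments is zero
lemma aux_weier {h : ℝ → ℝ} (hc : ContinuousOn h (Set.Icc 0 1))
    (hm : ∀ n : ℕ, ∫ x in Set.Icc (0:ℝ) 1, x ^ n * h x = 0) :
    ∀ x ∈ Set.Icc (0:ℝ) 1, h x = 0 := by
  have hint : IntegrableOn h (Set.Icc 0 1) := hc.integrableOn_Icc
  have hmono : ∀ i : ℕ, IntegrableOn (fun x => x ^ i * h x) (Set.Icc (0:ℝ) 1) :=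
    fun i => (ContinuousOn.mul (continuousOn_pow i) hc).integrableOn_Icc
  have hpoly : ∀ P : Polynomial ℝ, ∫ x in Set.Icc (0:ℝ) 1, P.eval x * h x = 0 := by
    intro P
    have : ∀ x : ℝ, P.eval x * h x =
        ∑ i ∈ Finset.range (P.natDegree + 1), P.coeff i * (x ^ i * h x) := by
      intro x
      rw [Polynomial.eval_eq_sum_range, Finset.sum_mul]
      exact Finset.sum_congr rfl fun i _ => by ring
    simp_rw [this]
    rw [MeasureTheory.integral_finset_sum]
    · refine Finset.sum_eq_zero fun i _ => ?_
      rw [MeasureTheory.integral_const_mul, hm, mul_zero]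
    · exact fun i _ => ((hmono i).const_mul _)
  have hsq : ∫ x in Set.Icc (0:ℝ) 1, h x * h x = 0 := by
    have key : ∀ ε : ℝ, 0 < ε → (∫ x in Set.Icc (0:ℝ) 1, h x * h x) ≤
        ε * ∫ x in Set.Icc (0:ℝ) 1, |h x| := by
      intro ε hε
      obtain ⟨P, hP⟩ := exists_polynomial_near_of_continuousOn 0 1 h hc ε hε
      have hsplit : ∀ x : ℝ, h x * h x = h x * (h x - P.eval x) + P.eval x * h x := by
        intro x; ring
      rw [MeasureTheory.integral_congr_ae (Filter.Eventually.of_forall hsplit) ,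
        MeasureTheory.integral_add ?int1 ?int2, hpoly, add_zero]
      case int1 =>
        exact (hc.mul (hc.sub (Polynomial.continuousOn _))).integrableOn_Icc
      case int2 =>
        exact ((Polynomial.continuousOn _).mul hc).integrableOn_Icc
      calc (∫ x in Set.Icc (0:ℝ) 1, h x * (h x - P.eval x))
          ≤ ∫ x in Set.Icc (0:ℝ) 1, |h x| * ε := by
            refine setIntegral_mono_on
              (hc.mul (hc.sub (Polynomial.continuousOn _))).integrableOn_Icc
              (hint.abs.mul_const ε) measurableSet_Icc fun x hx => ?_
            calc h x * (h x - P.eval x) ≤ |h x * (h x - P.eval x)| := le_abs_self _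
              _ = |h x| * |h x - P.eval x| := abs_mul _ _
              _ ≤ |h x| * ε := by
                  gcongr
                  rw [abs_sub_comm]
                  exact (hP x hx).le
        _ = ε * ∫ x in Set.Icc (0:ℝ) 1, |h x| := by
            rw [mul_comm ε, ← MeasureTheory.integral_mul_const]
    have hnn : 0 ≤ ∫ x in Set.Icc (0:ℝ) 1, h x * h x :=
      MeasureTheory.setIntegral_nonneg measurableSet_Icc fun x _ => mul_self_nonneg _
    have hI : 0 ≤ ∫ x in Set.Icc (0:ℝ) 1, |h x| :=
      MeasureTheory.setIntegral_nonneg measurableSet_Icc fun x _ => abs_nonneg _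
    by_contra hne
    have hpos : 0 < ∫ x in Set.Icc (0:ℝ) 1, h x * h x := lt_of_le_of_ne hnn (Ne.symm hne)
    rcases eq_or_lt_of_le hI with hI0 | hIpos
    · have := key 1 one_pos
      rw [← hI0, mul_zero] at this
      exact absurd this (not_le.mpr hpos)
    · set I := ∫ x in Set.Icc (0:ℝ) 1, |h x|
      have := key ((∫ x in Set.Icc (0:ℝ) 1, h x * h x) / (2 * I)) (by positivity)
      rw [div_mul_eq_mul_div, mul_comm] at this
      have h2 : (∫ x in Set.Icc (0:ℝ) 1, h x * h x) ≤ (∫ x in Set.Icc (0:ℝ) 1, h x * h x) / 2 := by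
        calc (∫ x in Set.Icc (0:ℝ) 1, h x * h x) ≤ I * (∫ x in Set.Icc (0:ℝ) 1, h x * h x) / (2 * I) := this
          _ = (∫ x in Set.Icc (0:ℝ) 1, h x * h x) / 2 := by
              field_simp
      linarith
  -- conclude h = 0 on Icc
  intro x₀ hx₀
  by_contra hne
  have hcont := hc x₀ hx₀
  rw [ContinuousWithinAt] at hcont
  have hev : ∀ᶠ x in nhdsWithin x₀ (Set.Icc 0 1), h x ≠ 0 :=
    hcont.eventually (eventually_ne_nhds hne)
  obtain ⟨U, hU, hUopen, hx₀U⟩ := mem_nhdsWithin.mp hev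
  obtain ⟨δ, hδ, hballU⟩ := Metric.isOpen_iff.mp hU x₀ hUopen
  have hsupp : Metric.ball x₀ δ ∩ Set.Ioo 0 1 ⊆
      (Function.support fun x => h x * h x) ∩ Set.Icc 0 1 := by
    rintro x ⟨hb, hx⟩
    refine ⟨?_, Set.Ioo_subset_Icc_self hx⟩
    have : h x ≠ 0 := hx₀U ⟨hballU hb, Set.Ioo_subset_Icc_self hx⟩
    simpa [Function.support, mul_self_ne_zero]
  have hne' : (Metric.ball x₀ δ ∩ Set.Ioo 0 1).Nonempty := by
    have hx₀c : x₀ ∈ closure (Set.Ioo (0:ℝ) 1) := by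
      rw [closure_Ioo one_ne_zero.symm]; exact hx₀
    rcases Metric.mem_closure_iff.mp hx₀c δ hδ with ⟨y, hy, hyd⟩
    exact ⟨y, Metric.mem_ball'.mpr hyd, hy⟩
  have hmeaspos : 0 < volume ((Function.support fun x => h x * h x) ∩ Set.Icc 0 1) := by
    refine lt_of_lt_of_le ?_ (measure_mono hsupp)
    exact (Metric.isOpen_ball.inter isOpen_Ioo).measure_pos volume hne'
  have := (MeasureTheory.setIntegral_pos_iff_support_of_nonneg_ae
    (Filter.Eventually.of_forall fun x => mul_self_nonneg (h x))
    ((hc.mul hc).integrableOn_Icc)).mpr (by simpa using hmeaspos)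
  rw [hsq] at this
  exact lt_irrefl 0 this

lemma aux_moments_kappa {v : ℝ → ℝ} {κ : ℝ} (hκ : 0 < κ)
    (hint : ∀ k : ℕ, IntegrableOn (fun t => t ^ k * (Real.exp (-κ * t) * v t)) (Set.Ioi 0))
    (hcoeff : ∀ n : ℕ,
      ∫ t in Set.Ioi (0 : ℝ), Real.exp (-κ * t) * laguerre n (κ * t) * v t = 0) :
    ∀ k : ℕ, ∫ t in Set.Ioi (0:ℝ), t ^ k * (Real.exp (-κ * t) * v t) = 0 := by
  intro k
  induction k using Nat.strong_induction_on with
  | _ k IH =>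
    have hexpand : ∀ t : ℝ, Real.exp (-κ * t) * laguerre k (κ * t) * v t =
        ∑ j ∈ Finset.range (k + 1),
          ((k.choose j : ℝ) * (-κ) ^ j / (j.factorial : ℝ)) *
            (t ^ j * (Real.exp (-κ * t) * v t)) := by
      intro t
      rw [laguerre, Finset.mul_sum, Finset.sum_mul]
      refine Finset.sum_congr rfl fun j _ => ?_
      rw [neg_pow (κ * t), mul_pow]
      ring
    have h0 := hcoeff k
    rw [MeasureTheory.integral_congr_ae (Filter.Eventually.of_forall hexpand)] at h0
    rw [MeasureTheory.integral_finset_sum _ (fun j _ => (hint j).const_mul _)] at h0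
    simp_rw [MeasureTheory.integral_const_mul] at h0
    rw [Finset.sum_range_succ] at h0
    have hvanish : ∀ j ∈ Finset.range k,
        ((k.choose j : ℝ) * (-κ) ^ j / (j.factorial : ℝ)) *
          (∫ t in Set.Ioi (0:ℝ), t ^ j * (Real.exp (-κ * t) * v t)) = 0:= by
      intro j hj
      rw [IH j (Finset.mem_range.mp hj), mul_zero]
    rw [Finset.sum_eq_zero hvanish, zero_add, Nat.choose_self, Nat.cast_one, one_mul] at h0
    have hne : ((-κ) ^ k / (k.factorial : ℝ)) ≠ 0 :=
      div_ne_zero (pow_ne_zero _ (by linarith)) (Nat.cast_ne_zero.mpr k.factorial_ne_zero)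
    rcases mul_eq_zero.mp h0 with h | h
    · exact absurd h hne
    · exact h
theorem laguerre_coeffs_vanish_imp_zero (κ : ℝ) (hκ : 0 < κ) (v : ℝ → ℝ)
    (hv : Continuous v) (hv0 : v 0 = 0)
    (hgrowth : ∃ C p : ℝ, ∀ t : ℝ, 0 ≤ t → |v t| ≤ C * (1 + t) ^ p)
    (hcoeff : ∀ n : ℕ,
      ∫ t in Set.Ioi (0 : ℝ), Real.exp (-κ * t) * laguerre n (κ * t) * v t = 0) :
    ∀ t : ℝ, 0 ≤ t → v t = 0 := by
  classical
  obtain ⟨C, p, hg⟩ := hgrowth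
  have hC0 : 0 ≤ C := by
    have := hg 0 le_rfl
    rw [add_zero, Real.one_rpow, mul_one] at this
    exact le_trans (abs_nonneg _) this
  set q : ℕ := ⌈p⌉₊ with hq
  have hC : ∀ t : ℝ, 0 ≤ t → |v t| ≤ C * (1 + t) ^ q := by
    intro t ht
    refine le_trans (hg t ht) ?_
    have h1t : (1:ℝ) ≤ 1 + t := by linarith
    calc C * (1 + t) ^ p ≤ C * (1 + t) ^ (q : ℝ) :=
          mul_le_mul_of_nonneg_left (Real.rpow_le_rpow_of_exponent_le h1t (Nat.le_ceil p)) hC0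
      _ = C * (1 + t) ^ q := by rw [Real.rpow_natCast]
  -- moment function
  set M : ℕ → ℝ → ℝ := fun k s => ∫ t in Set.Ioi (0:ℝ), t ^ k * (Real.exp (-s * t) * v t)
    with hM
  -- moments at κ vanish
  have hMκ : ∀ k, M k κ = 0 :=
    aux_moments_kappa hκ (fun k => aux_integrable_v hv hC0 hC hκ k) hcoeff
  -- the key vanishing set
  set S : ℝ → Prop := fun s => 0 < s ∧ ∀ k, M k s = 0 with hS
  have hSκ : S κ := ⟨hκ, hMκ⟩
  -- Laplace transform vanishes near points of S
  have hFzero : ∀ s, S s → ∀ w, s/2 < w → w < s + s/2 →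
      (∫ t in Set.Ioi (0:ℝ), Real.exp (-w * t) * v t) = 0 := by
    rintro s ⟨hs, hMs⟩ w hw1 hw2
    have hu : |w - s| < s / 2 := abs_lt.mpr ⟨by linarith, by linarith⟩
    have hA := aux_hasSum hv hC0 hC hs hu
    rw [show s + (w - s) = w by ring] at hA
    have hz : (fun k : ℕ => ((-(w - s)) ^ k / (k.factorial : ℝ)) * M k s)
        = fun _ => (0:ℝ) := by
      funext k; rw [hMs k, mul_zero]
    rw [hz] at hA
    exact (hA.unique hasSum_zero)
  -- S propagates
  have hSstep : ∀ s, S s → ∀ s', s/2 < s' → s' < s + s/2 → S s' := by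
    rintro s hSs s' h1 h2
    have hs : 0 < s := hSs.1
    have hs' : 0 < s' := lt_trans (by linarith) h1
    refine ⟨hs', ?_⟩
    set δ : ℝ := min (s'/2) (min (s' - s/2) (s + s/2 - s')) with hδdef
    have hδ : 0 < δ := by
      refine lt_min (by linarith) (lt_min (by linarith) (by linarith))
    have H : ∀ u : ℝ, |u| < δ →
        HasSum (fun k : ℕ => (((-1:ℝ)) ^ k / (k.factorial : ℝ) * M k s') * u ^ k) 0 := by
      intro u hu
      have hu1 : |u| < s' / 2 := lt_of_lt_of_le hu (min_le_left _ _)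
      have hu2 : |u| < s' - s/2 := lt_of_lt_of_le hu (le_trans (min_le_right _ _) (min_le_left _ _))
      have hu3 : |u| < s + s/2 - s' := lt_of_lt_of_le hu (le_trans (min_le_right _ _) (min_le_right _ _))
      have hA := aux_hasSum hv hC0 hC hs' hu1
      have habs := abs_lt.mp hu2
      have habs3 := abs_lt.mp hu3
      have hzero : (∫ t in Set.Ioi (0:ℝ), Real.exp (-(s' + u) * t) * v t) = 0 :=
        hFzero s hSs (s' + u) (by linarith) (by linarith)
      rw [hzero] at hA
      refine hA.congr_fun fun k => ?_
      rw [neg_pow u]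
      ring
    have hcz := aux_coeff_zero hδ H
    intro k
    have := hcz k
    have hne : ((-1:ℝ)) ^ k / (k.factorial : ℝ) ≠ 0 :=
      div_ne_zero (pow_ne_zero _ (by norm_num)) (Nat.cast_ne_zero.mpr k.factorial_ne_zero)
    rcases mul_eq_zero.mp this with h | h
    · exact absurd h hne
    · exact h
  -- S on [κ, κ*(5/4)^n]
  have hpow1 : ∀ n : ℕ, (1:ℝ) ≤ (5/4) ^ n := fun n => one_le_pow₀ (by norm_num)
  have hchain : ∀ n : ℕ, ∀ s', κ ≤ s' → s' ≤ κ * (5/4) ^ n → S s' := by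
    intro n
    induction n with
    | zero =>
      intro s' h1 h2
      rw [pow_zero, mul_one] at h2
      rwa [le_antisymm h2 h1]
    | succ n IHn =>
      intro s' h1 h2
      set s'' : ℝ := max κ ((4/5) * s') with hs''def
      have hs''1 : κ ≤ s'' := le_max_left _ _
      have hs''2 : s'' ≤ κ * (5/4) ^ n := by
        refine max_le ?_ ?_
        · calc κ = κ * 1 := (mul_one κ).symm
            _ ≤ κ * (5/4) ^ n := by gcongr; exact hpow1 n
        · have : (4/5 : ℝ) * s' ≤ (4/5) * (κ * (5/4) ^ (n+1)) := by gcongr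
          calc (4/5 : ℝ) * s' ≤ (4/5) * (κ * (5/4) ^ (n+1)) := this
            _ = κ * (5/4) ^ n := by rw [pow_succ]; ring
      have hSs'' : S s'' := IHn s'' hs''1 hs''2
      have hs''pos : 0 < s'' := lt_of_lt_of_le hκ hs''1
      refine hSstep s'' hSs'' s' ?_ ?_
      · have : s'' ≤ s' := max_le h1 (by nlinarith)
        linarith
      · have : s' ≤ (5/4) * s'' := by
          calc s' = (5/4) * ((4/5) * s') := by ring
            _ ≤ (5/4) * s'' := by gcongr; exact le_max_right _ _
        linarith
  -- Laplace transform vanishes for s ≥ κ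
  have hL : ∀ s : ℝ, κ ≤ s → (∫ t in Set.Ioi (0:ℝ), Real.exp (-s * t) * v t) = 0 := by
    intro s hs
    obtain ⟨n, hn⟩ := pow_unbounded_of_one_lt (s / κ) (by norm_num : (1:ℝ) < 5/4)
    have hSs : S s := hchain n s hs (by
      rw [div_lt_iff₀ hκ] at hn
      nlinarith)
    have h0 : (∫ t in Set.Ioi (0:ℝ), t ^ 0 * (Real.exp (-s * t) * v t)) = 0 := hSs.2 0
    have heq0 : (∫ t in Set.Ioi (0:ℝ), Real.exp (-s * t) * v t)
        = ∫ t in Set.Ioi (0:ℝ), t ^ 0 * (Real.exp (-s * t) * v t) := by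
      refine setIntegral_congr_fun measurableSet_Ioi fun t _ => ?_
      rw [pow_zero, one_mul]
    rw [heq0, h0]
  -- endgame
  set Mn : ℕ := ⌈κ⌉₊ + 1 with hMn
  set h : ℝ → ℝ := fun x => x ^ Mn * v (-Real.log x) with hh
  have hMn0 : Mn ≠ 0 := Nat.succ_ne_zero _
  -- continuity of h on [0,1]
  have hhcont : ContinuousOn h (Set.Icc 0 1) := by
    intro x hx
    rcases eq_or_lt_of_le hx.1 with h0 | h0
    · -- x = 0
      rw [← h0]
      have h0val : h 0 = 0 := by
        rw [hh]; simp [zero_pow hMn0]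
      -- tendsto along Ioi 0
      have hgt : Tendsto (fun x : ℝ => C * (x * (1 - Real.log x) ^ q))
          (nhdsWithin 0 (Set.Ioi 0)) (nhds 0) := by
        have T1 : Tendsto (fun t : ℝ => Real.exp (-1 * t) * (1 + t) ^ q) Filter.atTop (nhds 0) :=
          aux_tendsto_exp_poly 1 one_pos q
        have T2 : Tendsto (fun x : ℝ => -Real.log x) (nhdsWithin 0 (Set.Ioi 0)) Filter.atTop :=
          tendsto_neg_atBot_atTop.comp Real.tendsto_log_nhdsGT_zero
        have T3 := T1.comp T2
        have T4 : Tendsto (fun x : ℝ => x * (1 - Real.log x) ^ q)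
            (nhdsWithin 0 (Set.Ioi 0)) (nhds 0) := by
          refine T3.congr' ?_
          filter_upwards [self_mem_nhdsWithin] with x hx
          have hx0 : (0:ℝ) < x := hx
          simp only [Function.comp_apply]
          rw [show (-1 : ℝ) * -Real.log x = Real.log x by ring, Real.exp_log hx0,
            sub_eq_add_neg]
        have := T4.const_mul C
        rwa [mul_zero] at this
      have hbound : ∀ᶠ x in nhdsWithin (0:ℝ) (Set.Ioi 0),
          ‖h x‖ ≤ C * (x * (1 - Real.log x) ^ q) := by
        have hmem : Set.Ioo (0:ℝ) 1 ∈ nhdsWithin (0:ℝ) (Set.Ioi 0) :=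
          Ioo_mem_nhdsGT_of_mem ⟨le_rfl, one_pos⟩
        filter_upwards [hmem] with x hx
        have hx0 : (0:ℝ) < x := hx.1
        have hx1 : x < 1 := hx.2
        have hlog : Real.log x ≤ 0 := Real.log_nonpos hx0.le hx1.le
        have hnl : 0 ≤ -Real.log x := by linarith
        have hb := hC (-Real.log x) hnl
        rw [hh, norm_eq_abs, abs_mul, abs_pow, abs_of_pos hx0]
        calc x ^ Mn * |v (-Real.log x)| ≤ x ^ Mn * (C * (1 + -Real.log x) ^ q) := by gcongr
          _ ≤ x * (C * (1 + -Real.log x) ^ q) := by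
              have hxm : x ^ Mn ≤ x := pow_le_of_le_one hx0.le hx1.le hMn0
              have hnn : (0:ℝ) ≤ C * (1 + -Real.log x) ^ q := by positivity
              exact mul_le_mul_of_nonneg_right hxm hnn
          _ = C * (x * (1 - Real.log x) ^ q) := by rw [sub_eq_add_neg]; ring
      have hIoi : Tendsto h (nhdsWithin 0 (Set.Ioi 0)) (nhds 0) :=
        squeeze_zero_norm' hbound hgt
      have hIci : Tendsto h (nhdsWithin 0 (Set.Ici 0)) (nhds 0) := by
        rw [← Set.Ioi_insert, nhdsWithin_insert, Filter.tendsto_sup]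
        constructor
        · rw [Filter.tendsto_pure_left]
          intro s hs
          rw [h0val]
          exact mem_of_mem_nhds hs
        · exact hIoi
      have : Tendsto h (nhdsWithin 0 (Set.Icc 0 1)) (nhds 0) :=
        hIci.mono_left (nhdsWithin_mono 0 fun y hy => hy.1)
      rw [ContinuousWithinAt, h0val]
      exact this
    · -- x > 0
      have : ContinuousAt h x := by
        rw [hh]
        exact ((continuous_pow Mn).continuousAt).mul
          ((hv.continuousAt).comp ((Real.continuousAt_log h0.ne').neg))
      exact this.continuousWithinAt
  -- moments of h vanish
  have hmom : ∀ m : ℕ, ∫ x in Set.Icc (0:ℝ) 1, x ^ m * h x = 0 := by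
    intro m
    rw [MeasureTheory.integral_Icc_eq_integral_Ioo, aux_cov (fun x => x ^ m * h x)]
    have heq : ∀ t ∈ Set.Ioi (0:ℝ),
        Real.exp (-t) * (Real.exp (-t) ^ m * h (Real.exp (-t)))
          = Real.exp (-((m + Mn + 1 : ℕ) : ℝ) * t) * v t := by
      intro t _
      rw [hh]
      simp only [Real.log_exp, neg_neg]
      have hre : Real.exp (-t) * (Real.exp (-t) ^ m * (Real.exp (-t) ^ Mn * v t)) =
          (Real.exp (-t) * Real.exp (-t) ^ m * Real.exp (-t) ^ Mn) * v t := by ring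
      rw [hre, ← Real.exp_nat_mul, ← Real.exp_nat_mul, ← Real.exp_add, ← Real.exp_add]
      congr 1
      push_cast
      ring
    rw [setIntegral_congr_fun measurableSet_Ioi heq]
    refine hL _ ?_
    have h1 : κ ≤ (⌈κ⌉₊ : ℝ) := Nat.le_ceil κ
    have h2 : ((⌈κ⌉₊ : ℕ) : ℝ) ≤ ((m + Mn + 1 : ℕ) : ℝ) := by
      push_cast [hMn]
      have : (0:ℝ) ≤ m := Nat.cast_nonneg m
      linarith
    linarith
  have hzero := aux_weier hhcont hmom
  -- conclude
  intro t ht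
  rcases eq_or_lt_of_le ht with h0 | h0
  · rw [← h0]; exact hv0
  · have hx : Real.exp (-t) ∈ Set.Icc (0:ℝ) 1 := by
      constructor
      · exact (Real.exp_pos _).le
      · rw [show (1:ℝ) = Real.exp 0 by rw [Real.exp_zero]]
        exact Real.exp_le_exp.mpr (by linarith)
    have := hzero _ hx
    rw [hh] at this
    simp only [Real.log_exp, neg_neg] at this
    rcases mul_eq_zero.mp this with hcase | hcase
    · exact absurd hcase (pow_ne_zero _ (Real.exp_ne_zero _))
    · exact hcase
end
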